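/- (Orthogonality of second-kind family) With β > 1 real and the DJKM data as above, ∫ from t = (√(β+1) − √(β−1))/√2 to (√(β+1) + √(β−1))/√2 of t^{−n−m−3}·bₘ(t)·bₙ(t)·(t²+1)·√((t⁴ − 2βt² + 1)/(1−β)) dt equals 0 if n ≠ m and (π/2)(β+1)√(β−1) if n = m. -/

import Mathlib

open Polynomial intervalIntegral Real
set_option maxHeartbeats 1600000

private lemma adjoin_extract {p x y x' y' : Polynomial ℝ}
    (h : AdjoinRoot.of ((X : Polynomial (Polynomial ℝ)) ^ 2 - C p) x +
      AdjoinRoot.of (X ^ 2 - C p) y * AdjoinRoot.root (X ^ 2 - C p) =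
      AdjoinRoot.of (X ^ 2 - C p) x' +
      AdjoinRoot.of (X ^ 2 - C p) y' * AdjoinRoot.root (X ^ 2 - C p)) :
    x = x' ∧ y = y' := by
  have hf : ((X : Polynomial (Polynomial ℝ)) ^ 2 - C p).Monic :=
    monic_X_pow_sub_C p two_ne_zero
  have hdeg : ((X : Polynomial (Polynomial ℝ)) ^ 2 - C p).degree = 2 :=
    degree_X_pow_sub_C (by norm_num) p
  have hm : AdjoinRoot.mk ((X : Polynomial (Polynomial ℝ)) ^ 2 - C p)
      (C x + C y * X) = AdjoinRoot.mk (X ^ 2 - C p) (C x' + C y' * X) := by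
    simp only [map_add, map_mul, AdjoinRoot.mk_X]
    exact h
  rw [AdjoinRoot.mk_eq_mk] at hm
  have hqeq : (C x + C y * X : Polynomial (Polynomial ℝ)) - (C x' + C y' * X)
      = C (y - y') * X + C (x - x') := by
    rw [map_sub, map_sub]; ring
  have hq0 : (C x + C y * X : Polynomial (Polynomial ℝ)) - (C x' + C y' * X) = 0 := by
    by_contra h0
    exact hf.not_dvd_of_degree_lt h0
      (by rw [hdeg, hqeq]; exact lt_of_le_of_lt (degree_linear_le) (by norm_num)) hm
  rw [hqeq] at hq0
  constructor
  · have := congrArg (fun r => Polynomial.coeff r 0) hq0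
    simp [coeff_C_mul, sub_eq_zero] at this
    exact this
  · have := congrArg (fun r => Polynomial.coeff r 1) hq0
    simp [coeff_C_mul, coeff_C, sub_eq_zero] at this
    exact this

private lemma integral_cos_mul_pi {k : ℝ} (hk : k ≠ 0) :
    ∫ x in (0:ℝ)..π, Real.cos (k * x) = Real.sin (k * π) / k := by
  rw [intervalIntegral.integral_comp_mul_left (fun x => Real.cos x) hk]
  simp [integral_cos]
  ring

private lemma sin_orth (m n : ℕ) :
    (∫ x in (0:ℝ)..π, Real.sin ((m + 1) * x) * Real.sin ((n + 1) * x))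
      = if m = n then π / 2 else 0 := by
  have key : ∀ x : ℝ, Real.sin ((m + 1) * x) * Real.sin ((n + 1) * x)
      = (Real.cos (((m : ℝ) - n) * x) - Real.cos (((m : ℝ) + n + 2) * x)) / 2 := by
    intro x
    have := Real.two_mul_sin_mul_sin ((m + 1) * x) ((n + 1) * x)
    have e1 : ((m : ℝ) + 1) * x - ((n : ℝ) + 1) * x = ((m : ℝ) - n) * x := by ring
    have e2 : ((m : ℝ) + 1) * x + ((n : ℝ) + 1) * x = ((m : ℝ) + n + 2) * x := by ring
    rw [e1, e2] at this
    linarith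
  simp only [key]
  have i1 : IntervalIntegrable (fun x => Real.cos (((m : ℝ) - n) * x)) MeasureTheory.volume 0 π :=
    (Real.continuous_cos.comp (continuous_const.mul continuous_id)).intervalIntegrable _ _
  have i2 : IntervalIntegrable (fun x => Real.cos (((m : ℝ) + n + 2) * x)) MeasureTheory.volume 0 π :=
    (Real.continuous_cos.comp (continuous_const.mul continuous_id)).intervalIntegrable _ _
  rw [intervalIntegral.integral_div, intervalIntegral.integral_sub i1 i2]
  have h2 : ((m : ℝ) + n + 2) ≠ 0 := by positivity
  have v2 : (∫ x in (0:ℝ)..π, Real.cos (((m : ℝ) + n + 2) * x)) = 0 := by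
    rw [integral_cos_mul_pi h2]
    have : ((m : ℝ) + n + 2) = ((m + n + 2 : ℕ) : ℝ) := by push_cast; ring
    rw [this, Real.sin_nat_mul_pi]
    simp
  by_cases hmn : m = n
  · subst hmn
    simp only [sub_self, zero_mul, Real.cos_zero, if_pos rfl]
    rw [v2]
    simp
  · have h1 : ((m : ℝ) - n) ≠ 0 := by
      intro h
      exact hmn (Nat.cast_injective (by linarith : (m : ℝ) = n))
    have v1 : (∫ x in (0:ℝ)..π, Real.cos (((m : ℝ) - n) * x)) = 0 := by
      rw [integral_cos_mul_pi h1]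
      have : ((m : ℝ) - n) = (((m : ℤ) - n : ℤ) : ℝ) := by push_cast; ring
      rw [this, Real.sin_int_mul_pi]
      simp
    rw [v1, v2, if_neg hmn]
    simp

private lemma cheb_orth (m n : ℕ) :
    (∫ u in (-1:ℝ)..1, (Polynomial.Chebyshev.U ℝ m).eval u *
      (Polynomial.Chebyshev.U ℝ n).eval u * Real.sqrt (1 - u ^ 2))
      = if m = n then π / 2 else 0 := by
  set g : ℝ → ℝ := fun u => (Polynomial.Chebyshev.U ℝ m).eval u *
      (Polynomial.Chebyshev.U ℝ n).eval u * Real.sqrt (1 - u ^ 2) with hg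
  have hgc : Continuous g := by
    apply Continuous.mul
    · exact ((Polynomial.Chebyshev.U ℝ m).continuous_aeval).mul
        ((Polynomial.Chebyshev.U ℝ n).continuous_aeval)
    · exact Real.continuous_sqrt.comp (continuous_const.sub (continuous_pow 2))
  have hsub : (∫ θ in (0:ℝ)..π, (-Real.sin θ) • (g ∘ Real.cos) θ)
      = ∫ u in (Real.cos 0)..(Real.cos π), g u := by
    apply intervalIntegral.integral_comp_smul_deriv
    · intro x _
      simpa using (Real.hasDerivAt_cos x)
    · exact (Real.continuous_sin.neg).continuousOn
    · exact hgc
  have heq : ∀ θ ∈ Set.uIcc (0:ℝ) π, (-Real.sin θ) • (g ∘ Real.cos) θ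
      = -(Real.sin ((m + 1) * θ) * Real.sin ((n + 1) * θ)) := by
    intro θ hθ
    rw [Set.uIcc_of_le Real.pi_pos.le] at hθ
    have hs : 0 ≤ Real.sin θ := Real.sin_nonneg_of_nonneg_of_le_pi hθ.1 hθ.2
    have h1 : Real.sqrt (1 - Real.cos θ ^ 2) = Real.sin θ := by
      rw [show 1 - Real.cos θ ^ 2 = Real.sin θ ^ 2 by
        have := Real.sin_sq_add_cos_sq θ; linarith]
      exact Real.sqrt_sq hs
    have um := Polynomial.Chebyshev.U_real_cos θ (m : ℤ)
    have un := Polynomial.Chebyshev.U_real_cos θ (n : ℤ)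
    push_cast at um un
    simp only [smul_eq_mul, Function.comp_apply, hg, h1]
    linear_combination (-(eval (Real.cos θ) (Polynomial.Chebyshev.U ℝ (n:ℤ))) * Real.sin θ) * um
      - Real.sin (((m:ℝ) + 1) * θ) * un
  rw [intervalIntegral.integral_congr heq] at hsub
  rw [intervalIntegral.integral_neg, Real.cos_zero, Real.cos_pi] at hsub
  have := sin_orth m n
  rw [this] at hsub
  have : (∫ u in (-1:ℝ)..1, g u) = if m = n then π / 2 else 0 := by
    rw [intervalIntegral.integral_symm] at hsub
    linarith [hsub]
  exact this
theorem djkm_orthogonality_second (β : ℝ) (hβ : 1 < β)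
    (p : Polynomial ℝ)
    (hp : p = C ((β ^ 2 - 1)⁻¹) * (X ^ 4 - C (2 * β) * X ^ 2 + 1))
    (a b : ℕ → Polynomial ℝ)
    (ha1 : a 1 = C (Real.sqrt (2 * (β - 1)))⁻¹ * (X ^ 2 - 1))
    (hb0 : b 0 = C (Real.sqrt ((β + 1) / 2)))
    (ha0 : a 0 = 1)
    (hdef : ∀ n : ℕ,
      AdjoinRoot.of ((X : Polynomial (Polynomial ℝ)) ^ 2 - C p) (a (n + 1)) +
        AdjoinRoot.of (X ^ 2 - C p) (b n) * AdjoinRoot.root (X ^ 2 - C p) =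
      (AdjoinRoot.of (X ^ 2 - C p) (a 1) +
        AdjoinRoot.of (X ^ 2 - C p) (b 0) * AdjoinRoot.root (X ^ 2 - C p)) ^ (n + 1)) :
    ∀ n m : ℕ,
      (n ≠ m →
        (∫ t in ((Real.sqrt (β + 1) - Real.sqrt (β - 1)) / Real.sqrt 2)..((Real.sqrt (β + 1) + Real.sqrt (β - 1)) / Real.sqrt 2),
          (b m).eval t * (b n).eval t * (t ^ 2 + 1) *
            Real.sqrt ((t ^ 4 - 2 * β * t ^ 2 + 1) / (1 - β)) / t ^ (n + m + 3)) = 0) ∧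
      (n = m →
        (∫ t in ((Real.sqrt (β + 1) - Real.sqrt (β - 1)) / Real.sqrt 2)..((Real.sqrt (β + 1) + Real.sqrt (β - 1)) / Real.sqrt 2),
          (b m).eval t * (b n).eval t * (t ^ 2 + 1) *
            Real.sqrt ((t ^ 4 - 2 * β * t ^ 2 + 1) / (1 - β)) / t ^ (n + m + 3)) = Real.pi / 2 * (β + 1) * Real.sqrt (β - 1)) := by
  have hβ1 : (0:ℝ) < β - 1 := by linarith
  have hcpos : 0 < Real.sqrt (2 * (β - 1)) := Real.sqrt_pos.mpr (by linarith)
  have hcne : Real.sqrt (2 * (β - 1)) ≠ 0 := ne_of_gt hcpos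
  have hcsq : Real.sqrt (2 * (β - 1)) ^ 2 = 2 * (β - 1) := Real.sq_sqrt (by linarith)
  have hs0sq : Real.sqrt ((β + 1) / 2) ^ 2 = (β + 1) / 2 := Real.sq_sqrt (by linarith)
  have hkey : a 1 ^ 2 - p * b 0 ^ 2 = X ^ 2 := by
    apply Polynomial.funext
    intro t
    rw [ha1, hb0, hp]
    simp only [eval_mul, eval_add, eval_sub, eval_pow, eval_C, eval_X, eval_one]
    have h4 : β ^ 2 - 1 ≠ 0 := by nlinarith
    have h2s : Real.sqrt 2 ^ 2 = 2 := Real.sq_sqrt (by norm_num)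
    have hbs : Real.sqrt (β - 1) ^ 2 = β - 1 := Real.sq_sqrt (by linarith)
    field_simp
    simp only [hcsq, hs0sq]
    ring
  have hroot : (AdjoinRoot.root ((X : Polynomial (Polynomial ℝ)) ^ 2 - C p)) ^ 2 =
      AdjoinRoot.of (X ^ 2 - C p) p := by
    have : AdjoinRoot.mk ((X : Polynomial (Polynomial ℝ)) ^ 2 - C p) (X ^ 2) =
        AdjoinRoot.mk (X ^ 2 - C p) (C p) := AdjoinRoot.mk_eq_mk.mpr ⟨1, by ring⟩
    simpa only [map_pow, AdjoinRoot.mk_X, AdjoinRoot.mk_C] using this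
  have hrec : ∀ k : ℕ, a (k + 2) = a 1 * a (k + 1) + p * (b 0 * b k) ∧
      b (k + 1) = a 1 * b k + b 0 * a (k + 1) := by
    intro k
    apply adjoin_extract (p := p)
    calc AdjoinRoot.of ((X : Polynomial (Polynomial ℝ)) ^ 2 - C p) (a (k + 2)) +
        AdjoinRoot.of (X ^ 2 - C p) (b (k + 1)) * AdjoinRoot.root (X ^ 2 - C p)
        = (AdjoinRoot.of (X ^ 2 - C p) (a 1) +
            AdjoinRoot.of (X ^ 2 - C p) (b 0) * AdjoinRoot.root (X ^ 2 - C p)) *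
          (AdjoinRoot.of (X ^ 2 - C p) (a (k + 1)) +
            AdjoinRoot.of (X ^ 2 - C p) (b k) * AdjoinRoot.root (X ^ 2 - C p)) := by
          rw [hdef (k + 1), hdef k, pow_succ]; ring
      _ = AdjoinRoot.of (X ^ 2 - C p) (a 1 * a (k + 1) + p * (b 0 * b k)) +
          AdjoinRoot.of (X ^ 2 - C p) (a 1 * b k + b 0 * a (k + 1)) *
            AdjoinRoot.root (X ^ 2 - C p) := by
          simp only [map_add, map_mul]
          linear_combination (AdjoinRoot.of ((X : Polynomial (Polynomial ℝ)) ^ 2 - C p) (b 0) *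
            AdjoinRoot.of ((X : Polynomial (Polynomial ℝ)) ^ 2 - C p) (b k)) * hroot
  have hb1 : b 1 = 2 * a 1 * b 0 := by
    have h := (hrec 0).2
    norm_num at h
    rw [h]; ring
  have hbrec : ∀ k : ℕ, b (k + 2) = 2 * a 1 * b (k + 1) - X ^ 2 * b k := by
    intro k
    have h1 := (hrec (k + 1)).2
    have h2 := (hrec k).1
    have h3 := (hrec k).2
    calc b (k + 2) = a 1 * b (k + 1) + b 0 * a (k + 2) := h1
      _ = a 1 * b (k + 1) + b 0 * (a 1 * a (k + 1) + p * (b 0 * b k)) := by rw [h2]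
      _ = 2 * a 1 * b (k + 1) - X ^ 2 * b k := by
            linear_combination (-(a 1)) * h3 + (-(b k)) * hkey
  have hbeval : ∀ k : ℕ, ∀ t : ℝ, t ≠ 0 →
      (b k).eval t = Real.sqrt ((β + 1) / 2) * t ^ k *
        (Polynomial.Chebyshev.U ℝ k).eval ((t ^ 2 - 1) / (Real.sqrt (2 * (β - 1)) * t)) := by
    have main : ∀ k : ℕ,
        (∀ t : ℝ, t ≠ 0 → (b k).eval t = Real.sqrt ((β + 1) / 2) * t ^ k *
          (Polynomial.Chebyshev.U ℝ k).eval ((t ^ 2 - 1) / (Real.sqrt (2 * (β - 1)) * t))) ∧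
        (∀ t : ℝ, t ≠ 0 → (b (k + 1)).eval t = Real.sqrt ((β + 1) / 2) * t ^ (k + 1) *
          (Polynomial.Chebyshev.U ℝ (k + 1)).eval
            ((t ^ 2 - 1) / (Real.sqrt (2 * (β - 1)) * t))) := by
      intro k
      induction k with
      | zero =>
        constructor
        · intro t ht
          rw [hb0]
          simp
        · intro t ht
          rw [hb1, ha1, hb0]
          simp only [eval_mul, eval_ofNat, eval_C, eval_sub, eval_pow, eval_X, eval_one]
          have : Polynomial.Chebyshev.U ℝ ((0:ℕ) + 1 : ℤ) = 2 * X := by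
            norm_num
          rw [show ((0:ℕ) + 1 : ℤ) = ((1:ℕ) : ℤ) by norm_num] at this ⊢
          rw [this]
          simp only [eval_mul, eval_ofNat, eval_X]
          field_simp
          ring
      | succ j ih =>
        refine ⟨ih.2, ?_⟩
        intro t ht
        rw [show j + 1 + 1 = j + 2 from rfl, hbrec j]
        simp only [eval_sub, eval_mul, eval_pow, eval_ofNat, eval_X, ha1, eval_C, eval_one]
        rw [ih.2 t ht, ih.1 t ht]
        have hU := Polynomial.Chebyshev.U_add_two ℝ (j : ℤ)
        have hUe := congrArg (Polynomial.eval ((t ^ 2 - 1) / (Real.sqrt (2 * (β - 1)) * t))) hU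
        simp only [eval_sub, eval_mul, eval_ofNat, eval_X] at hUe
        push_cast
        rw [show ((j : ℤ) + 1 + 1 : ℤ) = (j : ℤ) + 2 by ring] at *
        rw [hUe]
        field_simp
        ring
    exact fun k => (main k).1
  -- analytic part
  intro n m
  have h2pos : (0:ℝ) < Real.sqrt 2 := Real.sqrt_pos.mpr (by norm_num)
  have h2sq : Real.sqrt 2 ^ 2 = 2 := Real.sq_sqrt (by norm_num)
  have hbpos : 0 < Real.sqrt (β - 1) := Real.sqrt_pos.mpr hβ1
  have hbsq : Real.sqrt (β - 1) ^ 2 = β - 1 := Real.sq_sqrt hβ1.le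
  have hBsq : Real.sqrt (β + 1) ^ 2 = β + 1 := Real.sq_sqrt (by linarith)
  have hBpos : 0 < Real.sqrt (β + 1) := Real.sqrt_pos.mpr (by linarith)
  have hlt : Real.sqrt (β - 1) < Real.sqrt (β + 1) := Real.sqrt_lt_sqrt hβ1.le (by linarith)
  have hcc : Real.sqrt (2 * (β - 1)) = Real.sqrt 2 * Real.sqrt (β - 1) :=
    Real.sqrt_mul (by norm_num) _
  set tmin : ℝ := (Real.sqrt (β + 1) - Real.sqrt (β - 1)) / Real.sqrt 2 with htmin
  set tmax : ℝ := (Real.sqrt (β + 1) + Real.sqrt (β - 1)) / Real.sqrt 2 with htmax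
  have htminpos : 0 < tmin := div_pos (by linarith) h2pos
  have hle : tmin ≤ tmax := by
    rw [htmin, htmax]
    gcongr
    linarith
  set c : ℝ := Real.sqrt (2 * (β - 1)) with hcdef
  set uf : ℝ → ℝ := fun t => (t ^ 2 - 1) / (c * t) with hufdef
  set F' : ℝ → ℝ := fun t => (t ^ 2 + 1) / (c * t ^ 2) with hFdef
  set g : ℝ → ℝ := fun u => (Polynomial.Chebyshev.U ℝ m).eval u *
      (Polynomial.Chebyshev.U ℝ n).eval u * Real.sqrt (1 - u ^ 2) with hgdef
  have huIcc : Set.uIcc tmin tmax = Set.Icc tmin tmax := Set.uIcc_of_le hle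
  have hposIcc : ∀ x ∈ Set.uIcc tmin tmax, 0 < x := by
    rw [huIcc]; intro x hx; linarith [hx.1]
  have hderiv : ∀ x ∈ Set.uIcc tmin tmax, HasDerivAt uf (F' x) x := by
    intro x hx
    have hx0 : x ≠ 0 := ne_of_gt (hposIcc x hx)
    have h1 : HasDerivAt (fun t : ℝ => t ^ 2 - 1) (2 * x) x := by
      simpa using (hasDerivAt_pow 2 x).sub_const 1
    have h2 : HasDerivAt (fun t : ℝ => c * t) c x := by
      simpa using (hasDerivAt_id x).const_mul c
    have h3 := h1.div h2 (mul_ne_zero hcne hx0)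
    refine HasDerivAt.congr_deriv h3 ?_
    rw [hFdef]
    field_simp
    ring
  have hFcont : ContinuousOn F' (Set.uIcc tmin tmax) := by
    apply ContinuousOn.div (by fun_prop) (by fun_prop)
    intro x hx
    exact mul_ne_zero hcne (pow_ne_zero 2 (ne_of_gt (hposIcc x hx)))
  have hgc : Continuous g := by
    rw [hgdef]
    apply Continuous.mul
    · exact ((Polynomial.Chebyshev.U ℝ m).continuous_aeval).mul
        ((Polynomial.Chebyshev.U ℝ n).continuous_aeval)
    · exact Real.continuous_sqrt.comp (continuous_const.sub (continuous_pow 2))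
  have hprod : Real.sqrt (β + 1) * Real.sqrt (β - 1) > β - 1 := by
    nlinarith [hBsq, hbsq, hBpos, hbpos, mul_pos hBpos hbpos]
  have e1 : tmin ^ 2 = β - Real.sqrt (β + 1) * Real.sqrt (β - 1) := by
    rw [htmin, div_pow, h2sq]
    linear_combination hBsq / 2 + hbsq / 2
  have e2 : c * tmin = Real.sqrt (β + 1) * Real.sqrt (β - 1) - (β - 1) := by
    rw [hcc, htmin]
    field_simp
    linear_combination (-1) * hbsq
  have e3 : tmax ^ 2 = β + Real.sqrt (β + 1) * Real.sqrt (β - 1) := by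
    rw [htmax, div_pow, h2sq]
    linear_combination hBsq / 2 + hbsq / 2
  have e4 : c * tmax = Real.sqrt (β + 1) * Real.sqrt (β - 1) + (β - 1) := by
    rw [hcc, htmax]
    field_simp
    linear_combination hbsq
  have hufmin : uf tmin = -1 := by
    rw [hufdef]
    simp only
    rw [e1, e2, div_eq_iff (ne_of_gt (by linarith : (0:ℝ) < Real.sqrt (β + 1) * Real.sqrt (β - 1) - (β - 1)))]
    ring
  have hufmax : uf tmax = 1 := by
    rw [hufdef]
    simp only
    rw [e3, e4, div_eq_iff (ne_of_gt (by positivity : (0:ℝ) < Real.sqrt (β + 1) * Real.sqrt (β - 1) + (β - 1)))]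
    ring
  have hpt : Set.EqOn
      (fun t : ℝ => (b m).eval t * (b n).eval t * (t ^ 2 + 1) *
        Real.sqrt ((t ^ 4 - 2 * β * t ^ 2 + 1) / (1 - β)) / t ^ (n + m + 3))
      (fun t : ℝ => ((β + 1) * Real.sqrt (β - 1)) * (F' t • (g ∘ uf) t))
      (Set.uIcc tmin tmax) := by
    intro t ht
    have htpos := hposIcc t ht
    have ht0 : t ≠ 0 := ne_of_gt htpos
    have h5 : (t ^ 4 - 2 * β * t ^ 2 + 1) / (1 - β) = (2 * t ^ 2) * (1 - (uf t) ^ 2) := by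
      rw [hufdef]
      simp only
      have hb1ne : (1:ℝ) - β ≠ 0 := by linarith
      field_simp
      linear_combination (t ^ 4 - 2 * β * t ^ 2 + 1 - 2 * (1 - β) * t ^ 2) * hcsq
    have hsq : Real.sqrt ((t ^ 4 - 2 * β * t ^ 2 + 1) / (1 - β))
        = (Real.sqrt 2 * t) * Real.sqrt (1 - (uf t) ^ 2) := by
      rw [h5, show (2 * t ^ 2 : ℝ) = (Real.sqrt 2 * t) ^ 2 by rw [mul_pow, h2sq],
        Real.sqrt_mul (by positivity) _, Real.sqrt_sq (by positivity)]
    have hkey2 : Real.sqrt ((β + 1) / 2) ^ 2 * Real.sqrt 2 * (Real.sqrt 2 * Real.sqrt (β - 1))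
        = (β + 1) * Real.sqrt (β - 1) := by
      rw [hs0sq]
      linear_combination ((β + 1) / 2 * Real.sqrt (β - 1)) * h2sq
    simp only [smul_eq_mul, Function.comp_apply]
    rw [hbeval m t ht0, hbeval n t ht0, hsq, hgdef]
    simp only
    have huft : uf t = (t ^ 2 - 1) / (c * t) := rfl
    have hFt : F' t = (t ^ 2 + 1) / (c * t ^ 2) := rfl
    rw [huft, hFt, hcc, pow_add, pow_add]
    set W := Real.sqrt (1 - ((t ^ 2 - 1) / (Real.sqrt 2 * Real.sqrt (β - 1) * t)) ^ 2) with hW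
    set Um := (Polynomial.Chebyshev.U ℝ m).eval ((t ^ 2 - 1) / (Real.sqrt 2 * Real.sqrt (β - 1) * t)) with hUm
    set Un := (Polynomial.Chebyshev.U ℝ n).eval ((t ^ 2 - 1) / (Real.sqrt 2 * Real.sqrt (β - 1) * t)) with hUn
    have htm : (t:ℝ) ^ m ≠ 0 := pow_ne_zero _ ht0
    have htn : (t:ℝ) ^ n ≠ 0 := pow_ne_zero _ ht0
    have h2ne : Real.sqrt 2 ≠ 0 := ne_of_gt h2pos
    have hbne : Real.sqrt (β - 1) ≠ 0 := ne_of_gt hbpos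
    field_simp
    simp only [hs0sq, h2sq]
    ring
  have hI : (∫ t in tmin..tmax,
      (b m).eval t * (b n).eval t * (t ^ 2 + 1) *
        Real.sqrt ((t ^ 4 - 2 * β * t ^ 2 + 1) / (1 - β)) / t ^ (n + m + 3))
      = ((β + 1) * Real.sqrt (β - 1)) * (if m = n then Real.pi / 2 else 0) := by
    rw [intervalIntegral.integral_congr hpt, intervalIntegral.integral_const_mul]
    have hcv := intervalIntegral.integral_comp_smul_deriv hderiv hFcont hgc
    rw [hufmin, hufmax] at hcv
    rw [hcv, hgdef]
    simp only
    rw [cheb_orth m n]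
  constructor
  · intro hnm
    rw [hI, if_neg (fun h => hnm h.symm), mul_zero]
  · intro hnm
    subst hnm
    rw [hI, if_pos rfl]
    ring
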